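/- For d even with d/2 odd, and n ≥ d+3, the stabilizer C_n^d of positive (d+1)×n matrices under column permutation is the cyclic group ℤ/n generated by the rotation i ↦ i+1 (mod n). -/

import Mathlib

noncomputable section

/-- The `(d+1)×(d+1)` matrix whose `j`-th column is `(1, cols j)`. -/
def liftMat {d : ℕ} (cols : Fin (d + 1) → Fin d → ℝ) : Matrix (Fin (d + 1)) (Fin (d + 1)) ℝ :=
  Matrix.of fun i j => Fin.cases (motive := fun _ => ℝ) 1 (fun r => cols j r) i

/-- The `(d+1) × n` matrix with columns `(1, x i)` is positive: all maximal minors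
(columns taken in increasing order) are positive. -/
def PosMat {d n : ℕ} (x : Fin n → Fin d → ℝ) : Prop :=
  ∀ S : Fin (d + 1) → Fin n, StrictMono S → 0 < (liftMat fun k => x (S k)).det

/-- `F` is a face of `P`: the set of maximizers in `P` of some linear functional. -/
def IsFace {d : ℕ} (P F : Set (Fin d → ℝ)) : Prop :=
  ∃ f : (Fin d → ℝ) →ₗ[ℝ] ℝ, ∃ c : ℝ,
    (∀ y ∈ P, f y ≤ c) ∧ F = {y ∈ P | f y = c}

/-- `F` is a facet of the `d`-dimensional polytope `P`: a face of dimension `d − 1`. -/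
def IsFacet {d : ℕ} (P F : Set (Fin d → ℝ)) : Prop :=
  IsFace P F ∧ Module.finrank ℝ (vectorSpan ℝ F) = d - 1

open Finset Equiv

lemma zmod2_add_self : ∀ a : ZMod 2, a + a = 0 := by decide

lemma zmod2_ne_zero_iff : ∀ a : ZMod 2, a ≠ 0 ↔ a = 1 := by decide

lemma zmod2_eq_iff_add_eq_zero : ∀ a b : ZMod 2, a + b = 0 ↔ a = b := by decide

lemma zmod2_ne_iff_add_eq_one : ∀ a b : ZMod 2, a + b = 1 ↔ a ≠ b := by decide

-- M3: product positivity criterion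
lemma prod_pos_iff_sum {ι : Type*} (s : Finset ι) (f : ι → ℝ) (h : ∀ i ∈ s, f i ≠ 0) :
    (0 < ∏ i ∈ s, f i) ↔ (∑ i ∈ s, if f i < 0 then (1 : ZMod 2) else 0) = 0 := by
  classical
  induction s using Finset.induction with
  | empty => simp
  | @insert a s ha ih =>
    rw [Finset.prod_insert ha, Finset.sum_insert ha]
    have hrest := ih (fun i hi => h i (Finset.mem_insert_of_mem hi))
    have hne : f a ≠ 0 := h a (Finset.mem_insert_self a s)
    have hprodne : ∏ i ∈ s, f i ≠ 0 :=
      Finset.prod_ne_zero_iff.2 fun i hi => h i (Finset.mem_insert_of_mem hi)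
    rw [mul_pos_iff]
    by_cases hfa : f a < 0
    · simp only [if_pos hfa]
      constructor
      · rintro (⟨h1, _⟩ | ⟨_, h2⟩)
        · exact absurd h1 (not_lt.2 hfa.le)
        · have : ¬ (0 < ∏ i ∈ s, f i) := not_lt.2 h2.le
          have hs1 : (∑ i ∈ s, if f i < 0 then (1 : ZMod 2) else 0) = 1 := by
            rcases (zmod2_ne_zero_iff _).mp (fun hc => this (hrest.mpr hc)) with h'
            exact h'
          rw [hs1]; exact zmod2_add_self 1
      · intro hsum
        right
        refine ⟨hfa, ?_⟩
        have hs1 : (∑ i ∈ s, if f i < 0 then (1 : ZMod 2) else 0) = 1 := by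
          rcases eq_or_ne (∑ i ∈ s, if f i < 0 then (1 : ZMod 2) else 0) 0 with h0 | h1
          · rw [h0, add_zero] at hsum; exact absurd hsum one_ne_zero
          · exact (zmod2_ne_zero_iff _).mp h1
        have : ¬ (0 < ∏ i ∈ s, f i) := fun hc => by
          rw [hrest.mp hc] at hs1; exact one_ne_zero hs1.symm
        exact lt_of_le_of_ne (not_lt.1 this) hprodne
    · simp only [if_neg hfa, zero_add]
      have hfa' : 0 < f a := lt_of_le_of_ne (not_lt.1 hfa) (Ne.symm hne)
      rw [← hrest]
      constructor
      · rintro (⟨_, h2⟩ | ⟨h1, _⟩)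
        · exact h2
        · exact absurd hfa' (not_lt.2 h1.le)
      · intro hp; exact Or.inl ⟨hfa', hp⟩

-- nested version
lemma prod2_pos_iff_sum {ι κ : Type*} (s : Finset ι) (t : ι → Finset κ) (f : ι → κ → ℝ)
    (h : ∀ i ∈ s, ∀ j ∈ t i, f i j ≠ 0) :
    (0 < ∏ i ∈ s, ∏ j ∈ t i, f i j) ↔
      (∑ i ∈ s, ∑ j ∈ t i, if f i j < 0 then (1 : ZMod 2) else 0) = 0 := by
  classical
  have hne : ∀ i ∈ s, (∏ j ∈ t i, f i j) ≠ 0 := fun i hi =>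
    Finset.prod_ne_zero_iff.2 fun j hj => h i hi j hj
  rw [prod_pos_iff_sum s _ hne]
  refine Eq.congr_left (Finset.sum_congr rfl fun i hi => ?_)
  have hinner := prod_pos_iff_sum (t i) (f i) (h i hi)
  by_cases hp : (∏ j ∈ t i, f i j) < 0
  · rw [if_pos hp]
    have h1 : ¬ (0 < ∏ j ∈ t i, f i j) := not_lt.2 hp.le
    exact ((zmod2_ne_zero_iff _).mp (fun hc => h1 (hinner.mpr hc))).symm
  · rw [if_neg hp]
    have h1 : 0 < ∏ j ∈ t i, f i j := lt_of_le_of_ne (not_lt.1 hp) (Ne.symm (hne i hi))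
    exact (hinner.mp h1).symm

variable {d n : ℕ}

def vcoord (a : Fin n) : ℝ := (a : ℕ)

def moment (d : ℕ) {n : ℕ} : Fin n → Fin d → ℝ := fun a r => (vcoord a) ^ ((r : ℕ) + 1)

def rProd {d n : ℕ} (J : Fin (d + 1) → Fin n) : ℝ :=
  ∏ k : Fin (d + 1), ∏ l ∈ Finset.Ioi k, (vcoord (J l) - vcoord (J k))

def negPar {d n : ℕ} (J : Fin (d + 1) → Fin n) : ZMod 2 :=
  ∑ k : Fin (d + 1), ∑ l ∈ Finset.Ioi k, if J l < J k then (1 : ZMod 2) else 0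

lemma det_moment (J : Fin (d + 1) → Fin n) :
    (liftMat fun k => moment d (J k)).det = rProd J := by
  have : (liftMat fun k => moment d (J k))
      = (Matrix.vandermonde fun k => vcoord (J k)).transpose := by
    ext i j
    simp only [liftMat, Matrix.of_apply, Matrix.transpose_apply, Matrix.vandermonde]
    induction i using Fin.cases with
    | zero => simp
    | succ r => simp [moment, Fin.val_succ]
  rw [this, Matrix.det_transpose, Matrix.det_vandermonde]
  rfl

lemma vcoord_sub_ne_zero {a b : Fin n} (h : a ≠ b) : vcoord a - vcoord b ≠ 0 := by
  have hne : (a : ℕ) ≠ (b : ℕ) := fun hc => h (Fin.ext hc)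
  simp only [vcoord, sub_ne_zero]
  exact_mod_cast hne

lemma vcoord_lt_iff {a b : Fin n} : vcoord a < vcoord b ↔ a < b := by
  simp only [vcoord]
  exact_mod_cast Iff.rfl

lemma rProd_pos_iff {J : Fin (d + 1) → Fin n} (hJ : Function.Injective J) :
    (0 < rProd J) ↔ negPar J = 0 := by
  rw [rProd, prod2_pos_iff_sum _ _ _ (fun k _ l hl =>
    vcoord_sub_ne_zero (fun hc => (Finset.mem_Ioi.1 hl).ne' (hJ hc)))]
  unfold negPar
  refine Eq.congr_left (Finset.sum_congr rfl fun k _ => Finset.sum_congr rfl fun l _ => ?_)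
  rcases lt_trichotomy (J l) (J k) with h1 | h1 | h1
  · rw [if_pos h1, if_pos (by rw [sub_neg]; exact vcoord_lt_iff.mpr h1)]
  · rw [h1]; simp
  · rw [if_neg (not_lt.2 h1.le),
      if_neg (by rw [not_lt, sub_nonneg]; exact (vcoord_lt_iff.mpr h1).le)]

lemma posMat_moment : PosMat (moment d (n := n)) := by
  intro S hS
  rw [det_moment]
  refine Finset.prod_pos fun k _ => Finset.prod_pos fun l hl => ?_
  rw [sub_pos]
  exact vcoord_lt_iff.mpr (hS (Finset.mem_Ioi.1 hl))

lemma det_liftMat_perm (x : Fin n → Fin d → ℝ) (J : Fin (d + 1) → Fin n)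
    (π : Equiv.Perm (Fin (d + 1))) :
    (liftMat fun k => x (J (π k))).det
      = (Equiv.Perm.sign π : ℤ) * (liftMat fun k => x (J k)).det := by
  have : (liftMat fun k => x (J (π k))) = (liftMat fun k => x (J k)).submatrix id π := rfl
  rw [this, Matrix.det_permute']

lemma preserve_iff (σ : Equiv.Perm (Fin n)) :
    (∀ x : Fin n → Fin d → ℝ, PosMat x → PosMat fun i => x (σ i)) ↔
      (∀ S : Fin (d + 1) → Fin n, StrictMono S → negPar (fun k => σ (S k)) = 0) := by
  constructor
  · intro h S hS
    have h1 := h (moment d) posMat_moment S hS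
    rw [show (liftMat fun k => (fun i => moment d (σ i)) (S k))
        = liftMat fun k => moment d (σ (S k)) from rfl, det_moment] at h1
    exact (rProd_pos_iff (σ.injective.comp hS.injective)).mp h1
  · intro hp x hx S hS
    set J : Fin (d + 1) → Fin n := fun k => σ (S k) with hJdef
    have hJinj : Function.Injective J := σ.injective.comp hS.injective
    set π := Tuple.sort J with hπ
    have hmono : Monotone (J ∘ π) := Tuple.monotone_sort J
    have hSinj : Function.Injective (J ∘ π) := hJinj.comp π.injective
    have hS' : StrictMono (J ∘ π) := hmono.strictMono_of_injective hSinj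
    have key : ∀ y : Fin n → Fin d → ℝ,
        (liftMat fun k => y (J k)).det
          = (Equiv.Perm.sign π⁻¹ : ℤ) * (liftMat fun k => y ((J ∘ π) k)).det := by
      intro y
      have := det_liftMat_perm y (J ∘ π) π⁻¹
      simpa using this
    have hmom := key (moment d)
    rw [det_moment, det_moment] at hmom
    have hpos1 : 0 < rProd J := (rProd_pos_iff hJinj).mpr (hp S hS)
    have hpos2 : 0 < rProd (J ∘ π) := (rProd_pos_iff hSinj).mpr (by
      unfold negPar
      refine Finset.sum_eq_zero fun k _ => Finset.sum_eq_zero fun l hl => ?_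
      rw [if_neg (not_lt.2 (hS' (Finset.mem_Ioi.1 hl)).le)])
    have hsign : ((Equiv.Perm.sign π⁻¹ : ℤ) : ℝ) = 1 := by
      rcases Int.units_eq_one_or (Equiv.Perm.sign π⁻¹) with h1 | h1
      · rw [h1]; norm_num
      · exfalso; rw [h1] at hmom; push_cast at hmom; nlinarith
    have := key x
    rw [this, hsign, one_mul]
    exact hx (J ∘ π) hS'

def inv2 (σ : Equiv.Perm (Fin n)) (x y : Fin n) : ZMod 2 :=
  if (x < y ∧ σ y < σ x) ∨ (y < x ∧ σ x < σ y) then 1 else 0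

lemma inv2_symm (σ : Equiv.Perm (Fin n)) (x y : Fin n) : inv2 σ x y = inv2 σ y x := by
  unfold inv2
  congr 1
  simp only [eq_iff_iff]
  tauto

lemma inv2_self (σ : Equiv.Perm (Fin n)) (x : Fin n) : inv2 σ x x = 0 := by
  unfold inv2
  rw [if_neg]
  rintro (⟨h, _⟩ | ⟨h, _⟩) <;> exact lt_irrefl _ h

lemma inv2_of_lt (σ : Equiv.Perm (Fin n)) {x y : Fin n} (h : x < y) :
    inv2 σ x y = if σ y < σ x then 1 else 0 := by
  unfold inv2
  by_cases hc : σ y < σ x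
  · rw [if_pos (Or.inl ⟨h, hc⟩), if_pos hc]
  · rw [if_neg, if_neg hc]
    rintro (⟨_, h2⟩ | ⟨h1, _⟩)
    · exact hc h2
    · exact absurd h (not_lt.2 h1.le)

def Qsum (σ : Equiv.Perm (Fin n)) (A : Finset (Fin n)) : ZMod 2 :=
  ∑ x ∈ A, ∑ y ∈ A.filter (fun y => x < y), inv2 σ x y

-- generic exchange lemma
lemma sum_pairs_comm {α M : Type*} [LinearOrder α] [DecidableEq α] [AddCommMonoid M]
    (A : Finset α) (h : α → α → M) :
    ∑ x ∈ A, ∑ y ∈ A.filter (fun y => x < y), h x y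
      = ∑ y ∈ A, ∑ x ∈ A.filter (fun x => x < y), h x y := by
  have l1 : ∀ x ∈ A, ∑ y ∈ A.filter (fun y => x < y), h x y
      = ∑ y ∈ A, if x < y then h x y else 0 := fun x _ => Finset.sum_filter _ _
  have l2 : ∀ y ∈ A, ∑ x ∈ A.filter (fun x => x < y), h x y
      = ∑ x ∈ A, if x < y then h x y else 0 := fun y _ => Finset.sum_filter _ _
  rw [Finset.sum_congr rfl l1, Finset.sum_congr rfl l2, Finset.sum_comm]

-- bridge: parity condition on strictly monotone tuples gives Qsum = 0 on all (d+1)-subsets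
lemma qsum_eq_zero_of_negPar (σ : Equiv.Perm (Fin n))
    (hp : ∀ S : Fin (d + 1) → Fin n, StrictMono S → negPar (fun k => σ (S k)) = 0)
    (A : Finset (Fin n)) (hA : A.card = d + 1) : Qsum σ A = 0 := by
  classical
  set E := A.orderEmbOfFin hA with hE
  have hSmono : StrictMono (⇑E) := E.strictMono
  have hmem : ∀ k, E k ∈ A := fun k => Finset.orderEmbOfFin_mem A hA k
  have hsurj : ∀ x ∈ A, ∃ k, E k = x := by
    intro x hx
    have : x ∈ Set.range ⇑E := by
      rw [Finset.range_orderEmbOfFin]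
      exact hx
    exact this
  have hinj : ∀ x ∈ Finset.univ, ∀ y ∈ Finset.univ, E x = E y → x = y :=
    fun x _ y _ h => E.injective h
  have hAim : A = Finset.image (⇑E) Finset.univ := by
    ext x
    simp only [Finset.mem_image, Finset.mem_univ, true_and]
    exact ⟨fun hx => hsurj x hx, fun ⟨k, hk⟩ => hk ▸ hmem k⟩
  have key := hp (⇑E) hSmono
  rw [← key]
  unfold Qsum negPar
  conv_lhs => rw [hAim]
  rw [Finset.sum_image hinj]
  refine Finset.sum_congr rfl fun k _ => ?_
  have hfilt : A.filter (fun y => E k < y) = Finset.image (⇑E) (Finset.Ioi k) := by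
    ext y
    simp only [Finset.mem_filter, Finset.mem_image, Finset.mem_Ioi]
    constructor
    · rintro ⟨hy, hlt⟩
      obtain ⟨l, rfl⟩ := hsurj y hy
      exact ⟨l, hSmono.lt_iff_lt.mp hlt, rfl⟩
    · rintro ⟨l, hl, rfl⟩
      exact ⟨hmem l, hSmono hl⟩
  rw [hAim] at hfilt
  rw [hfilt, Finset.sum_image (fun x _ y _ h => E.injective h)]
  refine Finset.sum_congr rfl fun l hl => ?_
  exact inv2_of_lt σ (hSmono (Finset.mem_Ioi.1 hl))

lemma natCast_zmod2_odd {m : ℕ} (h : Odd m) : (m : ZMod 2) = 1 := by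
  obtain ⟨j, rfl⟩ := h
  push_cast
  rw [(by decide : (2 : ZMod 2) = 0)]
  ring

lemma natCast_zmod2_even {m : ℕ} (h : Even m) : (m : ZMod 2) = 0 := by
  obtain ⟨j, rfl⟩ := h
  push_cast
  exact zmod2_add_self _

lemma Qsum_insert (σ : Equiv.Perm (Fin n)) {A : Finset (Fin n)} {a : Fin n} (ha : a ∉ A) :
    Qsum σ (insert a A) = Qsum σ A + ∑ y ∈ A, inv2 σ a y := by
  classical
  unfold Qsum
  rw [Finset.sum_insert ha]
  have h1 : (insert a A).filter (fun y => a < y) = A.filter (fun y => a < y) := by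
    rw [Finset.filter_insert, if_neg (lt_irrefl a)]
  have h2 : ∀ x ∈ A, ∑ y ∈ (insert a A).filter (fun y => x < y), inv2 σ x y
      = (∑ y ∈ A.filter (fun y => x < y), inv2 σ x y) + (if x < a then inv2 σ x a else 0) := by
    intro x hx
    rw [Finset.filter_insert]
    by_cases hxa : x < a
    · rw [if_pos hxa, Finset.sum_insert (fun hc => ha (Finset.mem_of_mem_filter _ hc)),
        if_pos hxa]
      ring
    · rw [if_neg hxa, if_neg hxa, add_zero]
  rw [h1, Finset.sum_congr rfl h2, Finset.sum_add_distrib, ← Finset.sum_filter]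
  have h3 : ∑ x ∈ A.filter (fun x => x < a), inv2 σ x a
      = ∑ x ∈ A.filter (fun x => x < a), inv2 σ a x :=
    Finset.sum_congr rfl fun x _ => inv2_symm σ x a
  have h4 : A.filter (fun y => ¬ a < y) = A.filter (fun y => y < a) := by
    apply Finset.filter_congr
    intro y hy
    have hne : y ≠ a := fun hc => ha (hc ▸ hy)
    simp only [not_lt, eq_iff_iff]
    exact ⟨fun hle => lt_of_le_of_ne hle hne, fun hlt => hlt.le⟩
  have h5 : ∑ y ∈ A.filter (fun y => a < y), inv2 σ a y
      + ∑ x ∈ A.filter (fun x => x < a), inv2 σ a x = ∑ y ∈ A, inv2 σ a y := by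
    rw [← h4, Finset.sum_filter_add_sum_filter_not A (fun y => a < y)]
  rw [h3]
  linear_combination h5

lemma rowsum_eq (σ : Equiv.Perm (Fin n))
    (hQ : ∀ A : Finset (Fin n), A.card = d + 1 → Qsum σ A = 0)
    {A : Finset (Fin n)} (hA : A.card = d) {a : Fin n} (ha : a ∉ A) :
    ∑ y ∈ A, inv2 σ a y = Qsum σ A := by
  have h := hQ (insert a A) (by rw [Finset.card_insert_of_notMem ha, hA])
  rw [Qsum_insert σ ha] at h
  exact ((zmod2_eq_iff_add_eq_zero _ _).mp (by linear_combination h)).symm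

-- the four-point relation
lemma star_rel (σ : Equiv.Perm (Fin n)) (hd1 : 1 ≤ d) (hn : d + 3 ≤ n)
    (hQ : ∀ A : Finset (Fin n), A.card = d + 1 → Qsum σ A = 0)
    {w x y z : Fin n} (hwx : w ≠ x) (hwy : w ≠ y) (hwz : w ≠ z) (hxy : x ≠ y)
    (hxz : x ≠ z) (hyz : y ≠ z) :
    inv2 σ w y + inv2 σ x y = inv2 σ w z + inv2 σ x z := by
  classical
  -- find U of card d - 1 avoiding w x y z
  have hcard : d - 1 ≤ (({w, x, y, z} : Finset (Fin n))ᶜ).card := by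
    rw [Finset.card_compl]
    have h4 : ({w, x, y, z} : Finset (Fin n)).card ≤ 4 := by
      apply le_trans (Finset.card_insert_le _ _)
      apply Nat.succ_le_succ
      apply le_trans (Finset.card_insert_le _ _)
      apply Nat.succ_le_succ
      apply le_trans (Finset.card_insert_le _ _)
      simp
    have hcn : n = Fintype.card (Fin n) := (Fintype.card_fin n).symm
    omega
  obtain ⟨U, hUsub, hUcard⟩ := Finset.exists_subset_card_eq hcard
  have hU : ∀ t ∈ U, t ≠ w ∧ t ≠ x ∧ t ≠ y ∧ t ≠ z := by
    intro t ht
    have := hUsub ht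
    rw [Finset.mem_compl] at this
    simp only [Finset.mem_insert, Finset.mem_singleton] at this
    tauto
  have hwU : w ∉ U := fun hc => (hU w hc).1 rfl
  have hxU : x ∉ U := fun hc => (hU x hc).2.1 rfl
  have hyU : y ∉ U := fun hc => (hU y hc).2.2.1 rfl
  have hzU : z ∉ U := fun hc => (hU z hc).2.2.2 rfl
  have hyUcard : (insert y U).card = d := by
    rw [Finset.card_insert_of_notMem hyU, hUcard]; omega
  have hzUcard : (insert z U).card = d := by
    rw [Finset.card_insert_of_notMem hzU, hUcard]; omega
  have hw_yU : w ∉ insert y U := by simp [hwy, hwU]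
  have hx_yU : x ∉ insert y U := by simp [hxy, hxU]
  have hw_zU : w ∉ insert z U := by simp [hwz, hwU]
  have hx_zU : x ∉ insert z U := by simp [hxz, hxU]
  have h1 := rowsum_eq σ hQ hyUcard hw_yU
  have h2 := rowsum_eq σ hQ hyUcard hx_yU
  have h3 := rowsum_eq σ hQ hzUcard hw_zU
  have h4 := rowsum_eq σ hQ hzUcard hx_zU
  rw [Finset.sum_insert hyU] at h1 h2
  rw [Finset.sum_insert hzU] at h3 h4
  linear_combination h1 - h2 - h3 + h4 + zmod2_add_self (inv2 σ x y)
    - zmod2_add_self (inv2 σ x z)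

def T3 (σ : Equiv.Perm (Fin n)) (x y z : Fin n) : ZMod 2 :=
  inv2 σ x y + inv2 σ x z + inv2 σ y z

lemma T3_comm12 (σ : Equiv.Perm (Fin n)) (x y z : Fin n) : T3 σ x y z = T3 σ y x z := by
  unfold T3
  rw [inv2_symm σ x y]
  ring

lemma T3_comm23 (σ : Equiv.Perm (Fin n)) (x y z : Fin n) : T3 σ x y z = T3 σ x z y := by
  unfold T3
  rw [inv2_symm σ y z]
  ring

lemma T3_comm13 (σ : Equiv.Perm (Fin n)) (x y z : Fin n) : T3 σ x y z = T3 σ z y x := by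
  rw [T3_comm12, T3_comm23, T3_comm12]

section TT
variable (σ : Equiv.Perm (Fin n)) (hd1 : 1 ≤ d) (hn : d + 3 ≤ n)
  (hQ : ∀ A : Finset (Fin n), A.card = d + 1 → Qsum σ A = 0)

include hd1 hn hQ

lemma T3_swap1 {x y z x' : Fin n} (hxy : x ≠ y) (hxz : x ≠ z) (hyz : y ≠ z)
    (hx'y : x' ≠ y) (hx'z : x' ≠ z) : T3 σ x y z = T3 σ x' y z := by
  by_cases hxx' : x = x'
  · rw [hxx']
  · have h := star_rel σ hd1 hn hQ hxx' hxy hxz hx'y hx'z hyz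
    unfold T3
    linear_combination h + zmod2_add_self (inv2 σ x z) - zmod2_add_self (inv2 σ x' y)

lemma T3_swap2 {x y z y' : Fin n} (hxy : x ≠ y) (hxz : x ≠ z) (hyz : y ≠ z)
    (hxy' : x ≠ y') (hy'z : y' ≠ z) : T3 σ x y z = T3 σ x y' z := by
  rw [T3_comm12, T3_comm12 σ x y' z]
  exact T3_swap1 σ hd1 hn hQ hxy.symm hyz hxz hxy'.symm hy'z

lemma T3_swap3 {x y z z' : Fin n} (hxy : x ≠ y) (hxz : x ≠ z) (hyz : y ≠ z)
    (hxz' : x ≠ z') (hyz' : y ≠ z') : T3 σ x y z = T3 σ x y z' := by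
  rw [T3_comm13, T3_comm13 σ x y z']
  exact T3_swap1 σ hd1 hn hQ hyz.symm hxz.symm hxy.symm hyz'.symm hxz'.symm

lemma T3_shared {t u v u' v' : Fin n} (htu : t ≠ u) (htv : t ≠ v) (huv : u ≠ v)
    (htu' : t ≠ u') (htv' : t ≠ v') (hu'v' : u' ≠ v') :
    T3 σ t u v = T3 σ t u' v' := by
  by_cases hu : u' = u
  · subst hu
    by_cases hv : v' = v
    · subst hv; rfl
    · exact T3_swap3 σ hd1 hn hQ htu htv huv htv' hu'v'
  · by_cases huv2 : u' = v
    · subst huv2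
      -- now goal : T3 σ t u u' = T3 σ t u' v'
      by_cases hv'u : v' = u
      · subst hv'u
        exact T3_comm23 σ t v' u'
      · -- v' ∉ {t, u', u}; first swap u → v' in second slot of (t, u, u')
        have h1 : T3 σ t u u' = T3 σ t v' u' :=
          T3_swap2 σ hd1 hn hQ htu htv huv htv' (fun hc => hu'v' hc.symm)
        rw [h1]
        exact T3_comm23 σ t v' u'
    · -- u' ∉ {u, v, t}
      have h1 : T3 σ t u v = T3 σ t u' v :=
        T3_swap2 σ hd1 hn hQ htu htv huv htu' (fun hc => huv2 hc)
      rw [h1]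
      by_cases hv : v' = v
      · subst hv; rfl
      · exact T3_swap3 σ hd1 hn hQ htu' htv (fun hc => huv2 hc) htv' hu'v'

lemma T3_const {a b c a' b' c' : Fin n} (hab : a ≠ b) (hac : a ≠ c) (hbc : b ≠ c)
    (hab' : a' ≠ b') (hac' : a' ≠ c') (hbc' : b' ≠ c') :
    T3 σ a b c = T3 σ a' b' c' := by
  by_cases h1 : a' = a
  · subst h1; exact T3_shared σ hd1 hn hQ hab hac hbc hab' hac' hbc'
  · by_cases h2 : a' = b
    · subst h2
      rw [T3_comm12 σ a a' c]
      exact T3_shared σ hd1 hn hQ (fun hc => hab (hc.symm ▸ rfl)) hbc hac hab' hac' hbc'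
    · by_cases h3 : a' = c
      · subst h3
        rw [T3_comm13 σ a b a']
        exact T3_shared σ hd1 hn hQ (fun hc => hbc hc.symm) (fun hc => hac hc.symm) hab.symm
          hab' hac' hbc'
      · have h4 : T3 σ a b c = T3 σ a' b c :=
          T3_swap1 σ hd1 hn hQ hab hac hbc (fun hc => h2 hc) (fun hc => h3 hc)
        rw [h4]
        exact T3_shared σ hd1 hn hQ (fun hc => h2 hc) (fun hc => h3 hc) hbc hab' hac' hbc'
end TT

lemma T3_zero (σ : Equiv.Perm (Fin n)) (hd : Even d) (hd2 : Odd (d / 2)) (hn : d + 3 ≤ n)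
    (hQ : ∀ A : Finset (Fin n), A.card = d + 1 → Qsum σ A = 0)
    {x y z : Fin n} (hxy : x ≠ y) (hxz : x ≠ z) (hyz : y ≠ z) : T3 σ x y z = 0 := by
  classical
  obtain ⟨r, hr⟩ := hd
  obtain ⟨t, ht⟩ := hd2
  have hd4 : d = 4 * t + 2 := by omega
  have hd1 : 1 ≤ d := by omega
  obtain ⟨A, hAsub, hA⟩ := Finset.exists_subset_card_eq (s := (Finset.univ : Finset (Fin n))) (n := d + 1)
    (by rw [Finset.card_univ, Fintype.card_fin]; omega)
  have hA0 : A.Nonempty := Finset.card_pos.1 (by omega)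
  obtain ⟨a₀, ha₀⟩ := hA0
  set A' := A.erase a₀ with hA'
  have ha₀A' : a₀ ∉ A' := Finset.notMem_erase _ _
  have hA'card : A'.card = d := by rw [hA', Finset.card_erase_of_mem ha₀, hA]; omega
  have hins : insert a₀ A' = A := Finset.insert_erase ha₀
  have hQA : Qsum σ A = 0 := hQ A hA
  rw [← hins, Qsum_insert σ ha₀A'] at hQA
  set c0 := T3 σ x y z with hc0
  set g : Fin n → ZMod 2 := fun u => inv2 σ u a₀ with hg
  set m : Fin n → ℕ := fun u => (A'.filter (fun v => u < v)).card with hm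
  set m' : Fin n → ℕ := fun u => (A'.filter (fun v => v < u)).card with hm'
  have key : ∀ u ∈ A', ∀ v ∈ A'.filter (fun v => u < v), inv2 σ u v = g u + g v + c0 := by
    intro u hu v hv
    rw [Finset.mem_filter] at hv
    have huv : u ≠ v := ne_of_lt hv.2
    have hua : u ≠ a₀ := Finset.ne_of_mem_erase hu
    have hva : v ≠ a₀ := Finset.ne_of_mem_erase hv.1
    have hT : T3 σ u v a₀ = c0 := T3_const σ hd1 hn hQ huv hua hva hxy hxz hyz
    unfold T3 at hT
    linear_combination hT - zmod2_add_self (g u) - zmod2_add_self (g v)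
  -- cardinal bookkeeping
  have hmm' : ∀ u ∈ A', m u + m' u = d - 1 := by
    intro u hu
    have hsplit : (A'.filter (fun v => u < v)).card + (A'.filter (fun v => ¬ u < v)).card
        = A'.card := Finset.card_filter_add_card_filter_not _
    have hfneg : A'.filter (fun v => ¬ u < v) = insert u (A'.filter (fun v => v < u)) := by
      ext v
      simp only [Finset.mem_filter, Finset.mem_insert, not_lt]
      constructor
      · rintro ⟨hvA, hvle⟩
        rcases lt_or_eq_of_le hvle with h | h
        · exact Or.inr ⟨hvA, h⟩
        · exact Or.inl h
      · rintro (h | ⟨hvA, hlt⟩)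
        · subst h; exact ⟨hu, le_refl _⟩
        · exact ⟨hvA, hlt.le⟩
    have hnotmem : u ∉ A'.filter (fun v => v < u) := by
      simp only [Finset.mem_filter]
      rintro ⟨_, hc⟩; exact lt_irrefl u hc
    rw [hfneg, Finset.card_insert_of_notMem hnotmem] at hsplit
    simp only [hm, hm']
    omega
  -- N and M
  set N := ∑ u ∈ A', m u with hN
  set M := ∑ u ∈ A', m' u with hM
  have hNM : N = M := by
    rw [hN, hM]
    have h1 : ∀ u ∈ A', m u = ∑ v ∈ A'.filter (fun v => u < v), (1 : ℕ) := by
      intro u _; simp only [hm]; rw [Finset.card_eq_sum_ones]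
    have h2 : ∀ u ∈ A', m' u = ∑ v ∈ A'.filter (fun v => v < u), (1 : ℕ) := by
      intro u _; simp only [hm']; rw [Finset.card_eq_sum_ones]
    rw [Finset.sum_congr rfl h1, Finset.sum_congr rfl h2]
    exact sum_pairs_comm A' (fun _ _ => (1 : ℕ))
  have hNMsum : N + M = d * (d - 1) := by
    rw [hN, hM, ← Finset.sum_add_distrib]
    rw [Finset.sum_congr rfl hmm', Finset.sum_const, hA'card, smul_eq_mul]
  have hNodd : Odd N := by
    have h41 : d - 1 = 4 * t + 1 := by omega
    obtain ⟨q, hq⟩ : ∃ q, d * (d - 1) = 16 * q + 12 * t + 2 :=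
      ⟨t * t, by rw [h41, hd4]; ring⟩
    clear_value N M
    rw [hq] at hNMsum
    rw [hNM] at hNMsum
    exact ⟨4 * q + 3 * t, by omega⟩
  -- main computation
  have hQA' : Qsum σ A' = (∑ u ∈ A', g u) + (N : ZMod 2) * c0 := by
    unfold Qsum
    rw [Finset.sum_congr rfl (fun u hu => Finset.sum_congr rfl (fun v hv => key u hu v hv))]
    have e1 : ∀ u ∈ A', ∑ v ∈ A'.filter (fun v => u < v), (g u + g v + c0)
        = ((m u : ZMod 2) * g u + (m u : ZMod 2) * c0)
          + ∑ v ∈ A'.filter (fun v => u < v), g v := by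
      intro u _
      rw [Finset.sum_add_distrib, Finset.sum_add_distrib, Finset.sum_const, Finset.sum_const,
        nsmul_eq_mul, nsmul_eq_mul]
      ring
    rw [Finset.sum_congr rfl e1, Finset.sum_add_distrib, Finset.sum_add_distrib]
    have e2 : ∑ u ∈ A', ∑ v ∈ A'.filter (fun v => u < v), g v
        = ∑ u ∈ A', (m' u : ZMod 2) * g u := by
      rw [sum_pairs_comm A' (fun _ v => g v)]
      refine Finset.sum_congr rfl fun u _ => ?_
      rw [Finset.sum_const, nsmul_eq_mul]
    have e3 : ∑ u ∈ A', (m u : ZMod 2) * c0 = (N : ZMod 2) * c0 := by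
      rw [← Finset.sum_mul, hN]
      push_cast
      ring
    rw [e2, e3]
    have e4 : ∑ u ∈ A', (m u : ZMod 2) * g u + ∑ u ∈ A', (m' u : ZMod 2) * g u
        = ∑ u ∈ A', g u := by
      rw [← Finset.sum_add_distrib]
      refine Finset.sum_congr rfl fun u hu => ?_
      have : (m u : ZMod 2) * g u + (m' u : ZMod 2) * g u
          = ((m u + m' u : ℕ) : ZMod 2) * g u := by push_cast; ring
      rw [this, hmm' u hu, natCast_zmod2_odd (⟨2 * t, by omega⟩ : Odd (d - 1)), one_mul]
    -- goal: (∑ m•g + ∑ m'•g) + N c0 sorted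
    linear_combination e4
  -- conclude
  have hlast : ∑ y ∈ A', inv2 σ a₀ y = ∑ u ∈ A', g u :=
    Finset.sum_congr rfl fun u _ => inv2_symm σ a₀ u
  rw [hQA', hlast] at hQA
  have hNone : (N : ZMod 2) = 1 := natCast_zmod2_odd hNodd
  rw [hNone] at hQA
  linear_combination hQA - zmod2_add_self (∑ u ∈ A', g u)

lemma zmod2_eq_zero_of_ne_one : ∀ a : ZMod 2, a ≠ 1 → a = 0 := by decide

open Fin.NatCast Fin.CommRing in
lemma finRotate_pow_apply {m : ℕ} (j : ℕ) (x : Fin (m + 1)) :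
    ((finRotate (m + 1)) ^ j) x = x + (j : Fin (m + 1)) := by
  induction j with
  | zero => simp
  | succ j ih =>
    rw [pow_succ', Equiv.Perm.mul_apply, ih, finRotate_succ_apply]
    push_cast
    ring

lemma perm_strictMono_eq_one {m : ℕ} (τ : Equiv.Perm (Fin m)) (h : StrictMono ⇑τ) :
    τ = 1 := by
  have hle : ∀ x, x ≤ τ x := by
    intro x
    have hmap : ∀ a ∈ Finset.Iic x, τ a ∈ Finset.Iic (τ x) := fun a ha =>
      Finset.mem_Iic.2 (h.monotone (Finset.mem_Iic.1 ha))
    have hinj : Set.InjOn ⇑τ (Finset.Iic x) := fun a _ b _ hab => τ.injective hab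
    have hcard := Finset.card_le_card_of_injOn ⇑τ hmap hinj
    rw [Fin.card_Iic, Fin.card_Iic] at hcard
    exact Fin.le_def.2 (by omega)
  have hsum : ∑ x : Fin m, ((τ x : ℕ)) = ∑ x : Fin m, (x : ℕ) :=
    Equiv.sum_comp τ (fun x => (x : ℕ))
  refine Equiv.ext fun x => ?_
  rw [Equiv.Perm.one_apply]
  by_contra hne
  have hlt : x < τ x := lt_of_le_of_ne (hle x) (fun hc => hne hc.symm)
  have hstrict : ∑ x : Fin m, (x : ℕ) < ∑ x : Fin m, ((τ x : ℕ)) :=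
    Finset.sum_lt_sum (fun i _ => Fin.le_def.1 (hle i))
      ⟨x, Finset.mem_univ x, Fin.lt_def.1 hlt⟩
  omega

lemma exists_f (σ : Equiv.Perm (Fin n)) (hd : Even d) (hd2 : Odd (d / 2)) (hn : d + 3 ≤ n)
    (hQ : ∀ A : Finset (Fin n), A.card = d + 1 → Qsum σ A = 0) :
    ∃ f : Fin n → ZMod 2, ∀ x y : Fin n, x ≠ y → inv2 σ x y = f x + f y := by
  have hn0 : 0 < n := by omega
  set o : Fin n := ⟨0, hn0⟩ with ho
  refine ⟨fun x => inv2 σ x o, ?_⟩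
  intro x y hxy
  show inv2 σ x y = inv2 σ x o + inv2 σ y o
  by_cases hxo : x = o
  · subst hxo
    rw [inv2_self, inv2_symm σ o y, zero_add]
  · by_cases hyo : y = o
    · subst hyo
      rw [inv2_self, add_zero]
    · have hT := T3_zero σ hd hd2 hn hQ hxy hxo hyo
      unfold T3 at hT
      linear_combination hT - zmod2_add_self (inv2 σ x o) - zmod2_add_self (inv2 σ y o)

open Fin.NatCast in
lemma sigma_mem_zpowers (σ : Equiv.Perm (Fin n)) (hn5 : 5 ≤ n)
    (f : Fin n → ZMod 2) (hf : ∀ x y : Fin n, x ≠ y → inv2 σ x y = f x + f y) :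
    σ ∈ Subgroup.zpowers (finRotate n) := by
  obtain ⟨m, rfl⟩ : ∃ m, n = m + 1 := ⟨n - 1, by omega⟩
  classical
  set f' : Fin (m + 1) → ZMod 2 := fun x => f x + f 0 with hf'
  have hf'0 : f' 0 = 0 := zmod2_add_self _
  have hff' : ∀ x y : Fin (m + 1), x ≠ y → inv2 σ x y = f' x + f' y := by
    intro x y hxy
    rw [hf x y hxy]
    simp only [hf']
    linear_combination - zmod2_add_self (f 0)
  have K1 : ∀ x y : Fin (m + 1), x < y → f' x = f' y → σ x < σ y := by
    intro x y hlt heq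
    have hz : inv2 σ x y = 0 := by
      rw [hff' x y (ne_of_lt hlt), heq]; exact zmod2_add_self _
    rw [inv2_of_lt σ hlt] at hz
    by_cases hc : σ y < σ x
    · rw [if_pos hc] at hz; exact absurd hz one_ne_zero
    · exact lt_of_le_of_ne (not_lt.1 hc)
        (fun he => (ne_of_lt hlt) (σ.injective he))
  have K2 : ∀ x y : Fin (m + 1), x < y → f' x ≠ f' y → σ y < σ x := by
    intro x y hlt hne
    have hz : inv2 σ x y = 1 := by
      rw [hff' x y (ne_of_lt hlt)]; exact (zmod2_ne_iff_add_eq_one _ _).mpr hne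
    rw [inv2_of_lt σ hlt] at hz
    by_cases hc : σ y < σ x
    · exact hc
    · rw [if_neg hc] at hz; exact absurd hz.symm one_ne_zero
  have hup : ∀ u v : Fin (m + 1), u < v → f' u = 1 → f' v = 1 := by
    intro u v hlt hu
    by_contra hv1
    have hv : f' v = 0 := zmod2_eq_zero_of_ne_one _ hv1
    have hu0 : u ≠ 0 := fun hc => by rw [hc, hf'0] at hu; exact zero_ne_one hu
    have h0u : (0 : Fin (m + 1)) < u := Fin.pos_of_ne_zero hu0
    have h1 := K2 0 u h0u (by rw [hf'0, hu]; exact zero_ne_one)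
    have h2 := K1 0 v (lt_trans h0u hlt) (by rw [hf'0, hv])
    have h3 := K2 u v hlt (by rw [hu, hv]; exact one_ne_zero)
    exact absurd (lt_trans (lt_trans h1 h2) h3) (lt_irrefl _)
  set B := Finset.univ.filter (fun x : Fin (m + 1) => f' x = 1) with hB
  set k := B.card with hk
  have h0B : (0 : Fin (m + 1)) ∉ B := by
    rw [hB]
    simp only [Finset.mem_filter]
    rintro ⟨_, hc⟩
    rw [hf'0] at hc
    exact zero_ne_one hc
  have hkm : k ≤ m := by
    have hsub : B ⊆ Finset.univ.erase 0 := fun b hb =>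
      Finset.mem_erase.2 ⟨fun hc => h0B (hc ▸ hb), Finset.mem_univ _⟩
    have := Finset.card_le_card hsub
    rw [Finset.card_erase_of_mem (Finset.mem_univ _), Finset.card_univ, Fintype.card_fin] at this
    omega
  have hchar : ∀ x : Fin (m + 1), f' x = 1 ↔ m + 1 - k ≤ (x : ℕ) := by
    intro x
    constructor
    · intro hx
      have hsub : Finset.Ici x ⊆ B := by
        intro y hy
        rw [Finset.mem_Ici] at hy
        rw [hB]
        refine Finset.mem_filter.2 ⟨Finset.mem_univ _, ?_⟩
        rcases lt_or_eq_of_le hy with h | h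
        · exact hup x y h hx
        · rw [← h]; exact hx
      have := Finset.card_le_card hsub
      rw [Fin.card_Ici] at this
      have hxm := x.isLt
      omega
    · intro hx
      by_contra hx1
      have hsub : B ⊆ Finset.Ioi x := by
        intro b hb
        rw [Finset.mem_Ioi]
        have hfb : f' b = 1 := (Finset.mem_filter.1 hb).2
        rcases lt_trichotomy b x with h | h | h
        · exact absurd (hup b x h hfb) hx1
        · exact absurd (h ▸ hfb) hx1
        · exact h
      have := Finset.card_le_card hsub
      rw [Fin.card_Ioi] at this
      have hxm := x.isLt
      omega
  set s : Fin (m + 1) := ((m + 1 - k : ℕ) : Fin (m + 1)) with hs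
  have hval : ∀ x : Fin (m + 1), ((x + s : Fin (m + 1)) : ℕ)
      = if (x : ℕ) < k then (x : ℕ) + (m + 1 - k) else (x : ℕ) - k := by
    intro x
    have hx := x.isLt
    have hsval : (s : ℕ) = (m + 1 - k) % (m + 1) := by rw [hs]; simp [Fin.val_natCast]
    rw [Fin.val_add, hsval]
    by_cases hk0 : k = 0
    · rw [hk0, Nat.sub_zero, Nat.mod_self, Nat.add_zero, if_neg (by omega), Nat.sub_zero]
      exact Nat.mod_eq_of_lt hx
    · have hsv : (m + 1 - k) % (m + 1) = m + 1 - k := Nat.mod_eq_of_lt (by omega)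
      rw [hsv]
      by_cases hxk : (x : ℕ) < k
      · rw [if_pos hxk]
        exact Nat.mod_eq_of_lt (by omega)
      · rw [if_neg hxk]
        have he : (x : ℕ) + (m + 1 - k) = (m + 1) + ((x : ℕ) - k) := by omega
        rw [he, Nat.add_mod_left]
        exact Nat.mod_eq_of_lt (by omega)
  have hf'val : ∀ z : Fin (m + 1), (m + 1 - k ≤ (z : ℕ) → f' z = 1)
      ∧ (¬ (m + 1 - k ≤ (z : ℕ)) → f' z = 0) := by
    intro z
    refine ⟨fun h => (hchar z).mpr h, fun h => ?_⟩
    exact zmod2_eq_zero_of_ne_one _ (fun hc => h ((hchar z).mp hc))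
  have hsm : ∀ x y : Fin (m + 1), x < y → σ (x + s) < σ (y + s) := by
    intro x y hlt
    have hab : (x : ℕ) < (y : ℕ) := Fin.lt_def.1 hlt
    have hxm := x.isLt
    have hym := y.isLt
    have hvx := hval x
    have hvy := hval y
    by_cases hxk : (x : ℕ) < k <;> by_cases hyk : (y : ℕ) < k
    · -- both in B after shift
      rw [if_pos hxk] at hvx
      rw [if_pos hyk] at hvy
      refine K1 _ _ (Fin.lt_def.2 (by omega)) ?_
      rw [(hf'val _).1 (by omega), (hf'val _).1 (by omega)]
    · -- x < k ≤ y : shifted y is below, shifted x above, f' differ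
      rw [if_pos hxk] at hvx
      rw [if_neg hyk] at hvy
      have h1 : f' (x + s) = 1 := (hf'val _).1 (by omega)
      have h0 : f' (y + s) = 0 := (hf'val _).2 (by omega)
      have hq : (y + s) < (x + s) := Fin.lt_def.2 (by omega)
      have := K2 _ _ hq (by rw [h0, h1]; exact zero_ne_one)
      exact this
    · omega
    · rw [if_neg hxk] at hvx
      rw [if_neg hyk] at hvy
      refine K1 _ _ (Fin.lt_def.2 (by omega)) ?_
      rw [(hf'val _).2 (by omega), (hf'val _).2 (by omega)]
  have hrot : ∀ x : Fin (m + 1), ((finRotate (m + 1)) ^ (m + 1 - k)) x = x + s :=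
    fun x => finRotate_pow_apply _ x
  have hτ : StrictMono ⇑(σ * (finRotate (m + 1)) ^ (m + 1 - k)) := by
    intro x y hlt
    rw [Equiv.Perm.mul_apply, Equiv.Perm.mul_apply, hrot, hrot]
    exact hsm x y hlt
  have h1 : σ * (finRotate (m + 1)) ^ (m + 1 - k) = 1 := perm_strictMono_eq_one _ hτ
  have h2 : σ = ((finRotate (m + 1)) ^ (m + 1 - k))⁻¹ := eq_inv_of_mul_eq_one_left h1
  rw [h2]
  exact Subgroup.inv_mem _ (Subgroup.npow_mem_zpowers _ _)

lemma negPar_rot {d m : ℕ} (hd : Even d) (S : Fin (d + 1) → Fin (m + 1)) (hS : StrictMono S) :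
    negPar (fun k => finRotate (m + 1) (S k)) = 0 := by
  classical
  have hkey : ∀ k l : Fin (d + 1), k < l →
      ((finRotate (m + 1) (S l) < finRotate (m + 1) (S k)) ↔ S l = Fin.last m) := by
    intro k l hkl
    have hSkl : S k < S l := hS hkl
    have hSknl : S k ≠ Fin.last m := by
      intro hc
      have := lt_of_lt_of_le hSkl (Fin.le_last (S l))
      rw [hc] at this
      exact absurd this (lt_irrefl _)
    have hvk : (finRotate (m + 1) (S k) : ℕ) = (S k : ℕ) + 1 := by
      rw [finRotate_succ_apply, Fin.val_add_one]
      rw [if_neg hSknl]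
    by_cases hl : S l = Fin.last m
    · rw [hl]
      have hv : (finRotate (m + 1) (Fin.last m) : ℕ) = 0 := by
        rw [finRotate_succ_apply, Fin.val_add_one, if_pos rfl]
      constructor
      · intro _; rfl
      · intro _
        rw [Fin.lt_def, hv, hvk]
        omega
    · have hvl : (finRotate (m + 1) (S l) : ℕ) = (S l : ℕ) + 1 := by
        rw [finRotate_succ_apply, Fin.val_add_one, if_neg hl]
      constructor
      · intro hc
        rw [Fin.lt_def, hvl, hvk] at hc
        have := Fin.lt_def.1 hSkl
        omega
      · intro hc; exact absurd hc hl
  unfold negPar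
  have hcongr : ∀ k : Fin (d + 1), ∀ l ∈ Finset.Ioi k,
      (if (fun k => finRotate (m + 1) (S k)) l < (fun k => finRotate (m + 1) (S k)) k
        then (1 : ZMod 2) else 0)
      = if S l = Fin.last m then 1 else 0 := by
    intro k l hl
    have := hkey k l (Finset.mem_Ioi.1 hl)
    by_cases hc : S l = Fin.last m
    · rw [if_pos hc, if_pos (this.mpr hc)]
    · rw [if_neg hc, if_neg (fun h => hc (this.mp h))]
  rw [Finset.sum_congr rfl (fun k _ => Finset.sum_congr rfl (fun l hl => hcongr k l hl))]
  by_cases hlast : S (Fin.last d) = Fin.last m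
  · have hiff : ∀ l : Fin (d + 1), S l = Fin.last m ↔ l = Fin.last d := by
      intro l
      constructor
      · intro h
        by_contra hc
        have hllt : l < Fin.last d := lt_of_le_of_ne (Fin.le_last l) hc
        have := hS hllt
        rw [h, hlast] at this
        exact absurd this (lt_irrefl _)
      · intro h; rw [h, hlast]
    have hinner : ∀ k : Fin (d + 1), ∑ l ∈ Finset.Ioi k, (if S l = Fin.last m then (1 : ZMod 2) else 0)
        = if k < Fin.last d then 1 else 0 := by
      intro k
      have h1 : ∀ l ∈ Finset.Ioi k, (if S l = Fin.last m then (1 : ZMod 2) else 0)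
          = if l = Fin.last d then 1 else 0 := by
        intro l _
        by_cases hc : l = Fin.last d
        · rw [if_pos hc, if_pos ((hiff l).mpr hc)]
        · rw [if_neg hc, if_neg (fun h => hc ((hiff l).mp h))]
      rw [Finset.sum_congr rfl h1, Finset.sum_ite_eq' (Finset.Ioi k) (Fin.last d) (fun _ => (1 : ZMod 2))]
      by_cases hc : k < Fin.last d
      · rw [if_pos (Finset.mem_Ioi.2 hc), if_pos hc]
      · rw [if_neg (fun h => hc (Finset.mem_Ioi.1 h)), if_neg hc]
    rw [Finset.sum_congr rfl (fun k _ => hinner k)]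
    rw [Finset.sum_boole]
    have hfilt : (Finset.univ.filter (fun k : Fin (d + 1) => k < Fin.last d))
        = Finset.univ.erase (Fin.last d) := by
      ext a
      simp only [Finset.mem_filter, Finset.mem_univ, true_and, Finset.mem_erase, and_true]
      constructor
      · intro h; exact ne_of_lt h
      · intro h; exact lt_of_le_of_ne (Fin.le_last a) h
    rw [hfilt, Finset.card_erase_of_mem (Finset.mem_univ _), Finset.card_univ, Fintype.card_fin]
    have he : d + 1 - 1 = d := by omega
    rw [he]
    exact natCast_zmod2_even hd
  · have hzero : ∀ k : Fin (d + 1), ∀ l ∈ Finset.Ioi k,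
        (if S l = Fin.last m then (1 : ZMod 2) else 0) = 0 := by
      intro k l _
      rw [if_neg]
      intro hc
      apply hlast
      rcases eq_or_lt_of_le (Fin.le_last l) with h | h
      · rw [← h]; exact hc
      · have := hS h
        rw [hc] at this
        exact absurd (lt_of_lt_of_le this (Fin.le_last _)) (lt_irrefl _)
    rw [Finset.sum_congr rfl (fun k _ => Finset.sum_eq_zero (hzero k))]
    exact Finset.sum_const_zero

lemma preserve_mul (σ τ : Equiv.Perm (Fin n))
    (hσ : ∀ x : Fin n → Fin d → ℝ, PosMat x → PosMat fun i => x (σ i))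
    (hτ : ∀ x : Fin n → Fin d → ℝ, PosMat x → PosMat fun i => x (τ i)) :
    ∀ x : Fin n → Fin d → ℝ, PosMat x → PosMat fun i => x ((σ * τ) i) := by
  intro x hx
  exact hτ (fun j => x (σ j)) (hσ x hx)

lemma preserve_pow (hd : Even d) (hn : d + 3 ≤ n) (j : ℕ) :
    ∀ x : Fin n → Fin d → ℝ, PosMat x → PosMat fun i => x (((finRotate n) ^ j) i) := by
  induction j with
  | zero =>
    intro x hx
    simpa using hx
  | succ j ih =>
    have hrotp : ∀ x : Fin n → Fin d → ℝ, PosMat x → PosMat fun i => x ((finRotate n) i) := by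
      obtain ⟨m, rfl⟩ : ∃ m, n = m + 1 := ⟨n - 1, by omega⟩
      exact (preserve_iff (finRotate (m + 1))).mpr (fun S hS => negPar_rot hd S hS)
    rw [pow_succ]
    exact preserve_mul _ _ ih hrotp


/-- for `d` even with `d/2` odd and `n ≥ d+3`, the stabilizer `C_n^d`
of positive matrices under column permutation is the cyclic group `ℤ/n` generated by
the rotation `finRotate n`. -/
theorem stabilizer_even_d_odd_half_cyclic {d n : ℕ} (hd : Even d) (hd2 : Odd (d / 2))
    (hn : d + 3 ≤ n) :
    {σ : Equiv.Perm (Fin n) |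
        ∀ x : Fin n → Fin d → ℝ, PosMat x → PosMat fun i => x (σ i)} =
      (Subgroup.zpowers (finRotate n) : Set (Equiv.Perm (Fin n))) := by
  ext σ
  simp only [Set.mem_setOf_eq, SetLike.mem_coe]
  constructor
  · intro hσ
    have hp := (preserve_iff σ).mp hσ
    have hQ : ∀ A : Finset (Fin n), A.card = d + 1 → Qsum σ A = 0 :=
      fun A hA => qsum_eq_zero_of_negPar σ hp A hA
    obtain ⟨f, hf⟩ := exists_f σ hd hd2 hn hQ
    have hn5 : 5 ≤ n := by
      obtain ⟨t, ht⟩ := hd2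
      omega
    exact sigma_mem_zpowers σ hn5 f hf
  · intro hmem
    obtain ⟨j, hj⟩ := mem_powers_iff_mem_zpowers.mpr hmem
    intro x hx
    rw [← hj]
    exact preserve_pow hd hn j x hx
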